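/- Let C be a simplicial complex and v a vertex of C such that the link Lk(v,C) collapses to a subcomplex S. Then C collapses to (C − v) ∪ (v ∗ S). In particular, if Lk(v,C) is collapsible then C collapses to the deletion C − v. -/

import Mathlib

/-- An (abstract, finite) simplicial complex: a finite family of nonempty finite vertex sets
closed under passing to nonempty subsets. -/
def IsComplex {V : Type*} [DecidableEq V] (C : Finset (Finset V)) : Prop :=
  ∀ σ ∈ C, σ.Nonempty ∧ ∀ τ ⊆ σ, τ.Nonempty → τ ∈ C

/-- An elementary collapse: deletion of a free face together with the unique face
strictly containing it. -/
def ElemCollapse {V : Type*} [DecidableEq V] (C C' : Finset (Finset V)) : Prop :=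
  ∃ σ τ : Finset V, σ ∈ C ∧ τ ∈ C ∧ σ ⊂ τ ∧ σ.Nonempty ∧
    (∀ ρ ∈ C, σ ⊂ ρ → ρ = τ) ∧ C' = C \ {σ, τ}

/-- `C` collapses onto `C'`. -/
def Collapses {V : Type*} [DecidableEq V] (C C' : Finset (Finset V)) : Prop :=
  Relation.ReflTransGen ElemCollapse C C'

/-- The link of a vertex `v` in `C`. -/
def lkv {V : Type*} [DecidableEq V] (v : V) (C : Finset (Finset V)) : Finset (Finset V) :=
  C.filter fun σ => v ∉ σ ∧ insert v σ ∈ C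

/-- The deletion of a vertex `v` from `C` (all faces not containing `v`). -/
def delv {V : Type*} [DecidableEq V] (v : V) (C : Finset (Finset V)) : Finset (Finset V) :=
  C.filter fun σ => v ∉ σ

/-- The cone (join) of a vertex `v` over a complex `S`. -/
def conev {V : Type*} [DecidableEq V] (v : V) (S : Finset (Finset V)) : Finset (Finset V) :=
  S ∪ S.image (insert v) ∪ {({v} : Finset V)}

section Aux

variable {V : Type*} [DecidableEq V]

lemma mem_lkv {v : V} {C : Finset (Finset V)} {σ : Finset V} :
    σ ∈ lkv v C ↔ σ ∈ C ∧ v ∉ σ ∧ insert v σ ∈ C := by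
  simp [lkv]

lemma mem_delv {v : V} {C : Finset (Finset V)} {σ : Finset V} :
    σ ∈ delv v C ↔ σ ∈ C ∧ v ∉ σ := by
  simp [delv]

lemma mem_conev {v : V} {S : Finset (Finset V)} {ρ : Finset V} :
    ρ ∈ conev v S ↔ ρ ∈ S ∨ (∃ σ ∈ S, insert v σ = ρ) ∨ ρ = {v} := by
  simp [conev, Finset.mem_union, Finset.mem_image, or_assoc]
  exact or_comm.trans or_assoc

lemma elemCollapse_subset {A B : Finset (Finset V)} (h : ElemCollapse A B) : B ⊆ A := by
  obtain ⟨σ, τ, _, _, _, _, _, rfl⟩ := h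
  exact Finset.sdiff_subset

lemma collapses_subset {A B : Finset (Finset V)} (h : Collapses A B) : B ⊆ A := by
  induction h with
  | refl => exact subset_rfl
  | tail _ h ih => exact fun x hx => ih (elemCollapse_subset h hx)

lemma insert_inj {v : V} {a b : Finset V} (ha : v ∉ a) (hb : v ∉ b)
    (h : insert v a = insert v b) : a = b := by
  rw [← Finset.erase_insert ha, ← Finset.erase_insert hb, h]

lemma insert_ne_singleton {v : V} {σ : Finset V} (hσ : σ.Nonempty) (hvσ : v ∉ σ) :
    insert v σ ≠ {v} := by
  obtain ⟨x, hx⟩ := hσ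
  intro h
  have : x ∈ ({v} : Finset V) := h ▸ Finset.mem_insert_of_mem hx
  rw [Finset.mem_singleton] at this
  exact hvσ (this ▸ hx)

lemma mem_pair {a b c : Finset V} : a ∈ ({b, c} : Finset (Finset V)) ↔ a = b ∨ a = c := by
  simp

/-- One elementary collapse in the link induces one in the whole complex. -/
lemma step_lemma (C : Finset (Finset V)) (v : V) {L L' : Finset (Finset V)}
    (hL : L ⊆ lkv v C) (h : ElemCollapse L L') :
    ElemCollapse (delv v C ∪ conev v L) (delv v C ∪ conev v L') := by
  obtain ⟨σ, τ, hσ, hτ, hst, hσne, hfree, rfl⟩ := h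
  have hvσ : v ∉ σ := (mem_lkv.1 (hL hσ)).2.1
  have hvτ : v ∉ τ := (mem_lkv.1 (hL hτ)).2.1
  have hτne : τ.Nonempty := hσne.mono hst.1
  have hLdel : ∀ ρ ∈ L, ρ ∈ delv v C := fun ρ hρ => by
    have := mem_lkv.1 (hL hρ); exact mem_delv.2 ⟨this.1, this.2.1⟩
  refine ⟨insert v σ, insert v τ, ?_, ?_, ?_, ⟨v, Finset.mem_insert_self _ _⟩, ?_, ?_⟩
  · exact Finset.mem_union_right _ (mem_conev.2 (Or.inr (Or.inl ⟨σ, hσ, rfl⟩)))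
  · exact Finset.mem_union_right _ (mem_conev.2 (Or.inr (Or.inl ⟨τ, hτ, rfl⟩)))
  · constructor
    · exact Finset.insert_subset_insert _ hst.1
    · intro hc
      refine hst.2 fun x hx => ?_
      have hx' : x ∈ insert v σ := hc (Finset.mem_insert_of_mem hx)
      rcases Finset.mem_insert.1 hx' with h1 | h1
      · exact absurd (h1 ▸ hx) hvτ
      · exact h1
  · -- freeness
    intro ρ hρ hsub
    have hvρ : v ∈ ρ := hsub.1 (Finset.mem_insert_self _ _)
    rcases Finset.mem_union.1 hρ with hρ | hρ
    · exact absurd hvρ (mem_delv.1 hρ).2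
    · rcases mem_conev.1 hρ with h1 | h1 | h1
      · exact absurd hvρ (mem_lkv.1 (hL h1)).2.1
      · obtain ⟨ρ', hρ', rfl⟩ := h1
        have hσρ' : σ ⊂ ρ' := by
          constructor
          · intro x hx
            have hx' : x ∈ insert v ρ' := hsub.1 (Finset.mem_insert_of_mem hx)
            rcases Finset.mem_insert.1 hx' with h2 | h2
            · exact absurd (h2 ▸ hx) hvσ
            · exact h2
          · intro hc
            exact hsub.2 (Finset.insert_subset_insert _ hc)
        rw [hfree ρ' hρ' hσρ']
      · subst h1
        obtain ⟨x, hx⟩ := hσne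
        have : x ∈ ({v} : Finset V) := hsub.1 (Finset.mem_insert_of_mem hx)
        rw [Finset.mem_singleton] at this
        exact absurd (this ▸ hx) hvσ
  · -- the resulting set equality
    apply Finset.Subset.antisymm
    · intro x hx
      rcases Finset.mem_union.1 hx with hx | hx
      · -- x ∈ delv: not equal to either removed face since those contain v
        refine Finset.mem_sdiff.2 ⟨Finset.mem_union_left _ hx, ?_⟩
        rw [mem_pair]
        rintro (rfl | rfl) <;>
          exact (mem_delv.1 hx).2 (Finset.mem_insert_self _ _)
      · rcases mem_conev.1 hx with hx | hx | hx
        · have hx' : x ∈ L := (Finset.mem_sdiff.1 hx).1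
          have hxd : x ∈ delv v C := hLdel x hx'
          refine Finset.mem_sdiff.2 ⟨Finset.mem_union_left _ hxd, ?_⟩
          rw [mem_pair]
          rintro (rfl | rfl) <;>
            exact (mem_delv.1 hxd).2 (Finset.mem_insert_self _ _)
        · obtain ⟨ρ', hρ', rfl⟩ := hx
          obtain ⟨hρ'L, hρne⟩ := Finset.mem_sdiff.1 hρ'
          rw [mem_pair] at hρne
          push_neg at hρne
          have hvρ' : v ∉ ρ' := (mem_lkv.1 (hL hρ'L)).2.1
          refine Finset.mem_sdiff.2 ⟨Finset.mem_union_right _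
            (mem_conev.2 (Or.inr (Or.inl ⟨ρ', hρ'L, rfl⟩))), ?_⟩
          rw [mem_pair]
          rintro (h | h)
          · exact hρne.1 (insert_inj hvρ' hvσ h)
          · exact hρne.2 (insert_inj hvρ' hvτ h)
        · subst hx
          refine Finset.mem_sdiff.2 ⟨Finset.mem_union_right _
            (mem_conev.2 (Or.inr (Or.inr rfl))), ?_⟩
          rw [mem_pair]
          rintro (h | h)
          · exact insert_ne_singleton hσne hvσ h.symm
          · exact insert_ne_singleton hτne hvτ h.symm
    · intro x hx
      obtain ⟨hx1, hx2⟩ := Finset.mem_sdiff.1 hx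
      rw [mem_pair] at hx2
      push_neg at hx2
      rcases Finset.mem_union.1 hx1 with hx1 | hx1
      · exact Finset.mem_union_left _ hx1
      · rcases mem_conev.1 hx1 with h1 | h1 | h1
        · exact Finset.mem_union_left _ (hLdel x h1)
        · obtain ⟨ρ', hρ', rfl⟩ := h1
          have hvρ' : v ∉ ρ' := (mem_lkv.1 (hL hρ')).2.1
          refine Finset.mem_union_right _
            (mem_conev.2 (Or.inr (Or.inl ⟨ρ', Finset.mem_sdiff.2 ⟨hρ', ?_⟩, rfl⟩)))
          rw [mem_pair]
          rintro (rfl | rfl)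
          · exact hx2.1 rfl
          · exact hx2.2 rfl
        · exact Finset.mem_union_right _ (mem_conev.2 (Or.inr (Or.inr h1)))

/-- `C` decomposes as its deletion plus the cone over the link. -/
lemma decomp (C : Finset (Finset V)) (v : V) (hC : IsComplex C)
    (hv : ({v} : Finset V) ∈ C) : delv v C ∪ conev v (lkv v C) = C := by
  ext x
  rw [Finset.mem_union, mem_conev]
  constructor
  · rintro (hx | hx | hx | hx)
    · exact (mem_delv.1 hx).1
    · exact (mem_lkv.1 hx).1
    · obtain ⟨σ, hσ, rfl⟩ := hx
      exact (mem_lkv.1 hσ).2.2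
    · exact hx ▸ hv
  · intro hx
    by_cases hvx : v ∈ x
    · by_cases hxv : x = {v}
      · exact Or.inr (Or.inr (Or.inr hxv))
      · have hne : (x.erase v).Nonempty := by
          rcases Finset.eq_empty_or_nonempty (x.erase v) with h | h
          · exfalso
            apply hxv
            apply Finset.eq_singleton_iff_unique_mem.2 ⟨hvx, fun y hy => ?_⟩
            by_contra hyv
            exact absurd (Finset.mem_erase.2 ⟨hyv, hy⟩) (h ▸ Finset.notMem_empty y)
          · exact h
        have herC : x.erase v ∈ C := (hC x hx).2 _ (Finset.erase_subset _ _) hne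
        refine Or.inr (Or.inr (Or.inl ⟨x.erase v, mem_lkv.2 ⟨herC, Finset.notMem_erase _ _, ?_⟩,
          Finset.insert_erase hvx⟩))
        rw [Finset.insert_erase hvx]; exact hx
    · exact Or.inl (mem_delv.2 ⟨hx, hvx⟩)

end Aux

theorem collapse_along_link {V : Type*} [DecidableEq V]
    (C : Finset (Finset V)) (v : V) (hC : IsComplex C) (hv : ({v} : Finset V) ∈ C) :
    (∀ S ⊆ lkv v C, Collapses (lkv v C) S → Collapses C (delv v C ∪ conev v S)) ∧
      ((∃ w : V, Collapses (lkv v C) {({w} : Finset V)}) → Collapses C (delv v C)) := by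
  have main : ∀ S : Finset (Finset V), Collapses (lkv v C) S →
      Collapses C (delv v C ∪ conev v S) := by
    intro S hS
    induction hS with
    | refl =>
        rw [decomp C v hC hv]
        exact Relation.ReflTransGen.refl
    | @tail b c hab hbc ih =>
        exact Relation.ReflTransGen.tail ih (step_lemma C v (collapses_subset hab) hbc)
  refine ⟨fun S _ hS => main S hS, ?_⟩
  rintro ⟨w, hw⟩
  have hsub : ({({w} : Finset V)} : Finset (Finset V)) ⊆ lkv v C := collapses_subset hw
  have hwlk : ({w} : Finset V) ∈ lkv v C := hsub (Finset.mem_singleton_self _)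
  obtain ⟨hwC, hvw, hvwC⟩ := mem_lkv.1 hwlk
  have hvne : v ≠ w := fun h => hvw (h ▸ Finset.mem_singleton_self w)
  refine Relation.ReflTransGen.tail (main _ hw) ?_
  refine ⟨{v}, insert v {w}, ?_, ?_, ?_, ⟨v, Finset.mem_singleton_self v⟩, ?_, ?_⟩
  · exact Finset.mem_union_right _ (mem_conev.2 (Or.inr (Or.inr rfl)))
  · exact Finset.mem_union_right _
      (mem_conev.2 (Or.inr (Or.inl ⟨{w}, Finset.mem_singleton_self _, rfl⟩)))
  · constructor
    · intro x hx
      rw [Finset.mem_singleton] at hx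
      exact hx ▸ Finset.mem_insert_self _ _
    · intro hc
      have : w ∈ ({v} : Finset V) := hc (Finset.mem_insert_of_mem (Finset.mem_singleton_self w))
      exact hvne (Finset.mem_singleton.1 this).symm
  · intro ρ hρ hsub'
    have hvρ : v ∈ ρ := hsub'.1 (Finset.mem_singleton_self v)
    rcases Finset.mem_union.1 hρ with hρ | hρ
    · exact absurd hvρ (mem_delv.1 hρ).2
    · rcases mem_conev.1 hρ with h2 | h2 | h2
      · rw [Finset.mem_singleton] at h2
        exact absurd (h2 ▸ hvρ) hvw
      · obtain ⟨ρ', hρ', rfl⟩ := h2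
        rw [Finset.mem_singleton] at hρ'
        rw [hρ']
      · subst h2
        exact absurd Finset.Subset.rfl hsub'.2
  · apply Finset.Subset.antisymm
    · intro x hx
      obtain ⟨hxC, hvx⟩ := mem_delv.1 hx
      refine Finset.mem_sdiff.2 ⟨Finset.mem_union_left _ hx, ?_⟩
      rw [mem_pair]
      rintro (rfl | rfl)
      · exact hvx (Finset.mem_singleton_self v)
      · exact hvx (Finset.mem_insert_self _ _)
    · intro x hx
      obtain ⟨hx1, hx2⟩ := Finset.mem_sdiff.1 hx
      rw [mem_pair] at hx2
      push_neg at hx2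
      rcases Finset.mem_union.1 hx1 with hx1 | hx1
      · exact hx1
      · rcases mem_conev.1 hx1 with h1 | h1 | h1
        · rw [Finset.mem_singleton] at h1
          exact h1 ▸ mem_delv.2 ⟨hwC, hvw⟩
        · obtain ⟨ρ', hρ', rfl⟩ := h1
          rw [Finset.mem_singleton] at hρ'
          exact absurd rfl (hρ' ▸ hx2.2)
        · exact absurd h1 hx2.1
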